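/- Let a, b, m, n be positive integers with m ≥ n and a·n ≥ m·b (i.e., m/n ≤ a/b). Then (b + 1)·⌈m/n⌉ ≤ 2a. -/

import Mathlib

/-- If m/n ≤ a/b (positive integers, m ≥ n), then (b+1)·⌈m/n⌉ ≤ 2a. -/
theorem stmt8 (a b m n : ℕ) (ha : 0 < a) (hb : 0 < b) (hm : 0 < m) (hn : 0 < n)
    (hmn : n ≤ m) (hab : m * b ≤ a * n) :
    ((b : ℤ) + 1) * ⌈(m : ℚ) / (n : ℚ)⌉ ≤ 2 * (a : ℤ) := by
  set E : ℤ := ⌈(m : ℚ) / (n : ℚ)⌉ with hE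
  have hn' : (0:ℚ) < n := by positivity
  have hba : b ≤ a := by nlinarith
  have hEpos : 0 < E := Int.ceil_pos.mpr (by positivity)
  by_cases h2 : E ≤ 1
  · have hE1 : E = 1 := le_antisymm h2 hEpos
    rw [hE1]
    have : (b:ℤ) ≤ a := by exact_mod_cast hba
    linarith [(show (1:ℤ) ≤ a by exact_mod_cast ha)]
  · push_neg at h2
    have hlt : ((E - 1 : ℤ) : ℚ) < (m : ℚ) / (n : ℚ) := Int.lt_ceil.mp (by omega)
    have hlt' : ((E - 1 : ℤ) : ℚ) * (n : ℚ) < (m : ℚ) := by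
      rwa [← lt_div_iff₀ hn']
    have hltZ : (E - 1) * (n : ℤ) < (m : ℤ) := by exact_mod_cast hlt'
    have habZ : (m : ℤ) * b ≤ (a : ℤ) * n := by exact_mod_cast hab
    have key : (b : ℤ) * ((E - 1) * n + 1) ≤ (a : ℤ) * n := by
      calc (b : ℤ) * ((E - 1) * n + 1) ≤ (b : ℤ) * m := by
            have : (E - 1) * (n:ℤ) + 1 ≤ m := hltZ
            exact mul_le_mul_of_nonneg_left this (by positivity)
        _ ≤ (a : ℤ) * n := by linarith
    have hbZ : (1:ℤ) ≤ b := by exact_mod_cast hb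
    have hnZ : (1:ℤ) ≤ n := by exact_mod_cast hn
    have ha' : (b : ℤ) * (E - 1) + 1 ≤ a := by nlinarith
    nlinarith
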